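/- Let H := (Fin n → ℤ) be the free abelian group of finite rank n and let G be any abelian group, both regarded as structures for the language of abelian groups. If G and H are isotyped, then G and H are isomorphic as additive groups: G ≃+ (Fin n → ℤ). -/
import Mathlib


/-- Function symbols of the first-order language of abelian groups:
a binary addition, a unary negation and a constant zero. -/
inductive AbGroupFunc : ℕ → Type
  | add : AbGroupFunc 2
  | neg : AbGroupFunc 1
  | zero : AbGroupFunc 0

/-- The first-order language of abelian groups. -/
def LAb : FirstOrder.Language where
  Functions := AbGroupFunc
  Relations := fun _ => Empty

/-- Any additive commutative group is an `LAb`-structure in the obvious way. -/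
instance LAb.structureOfAddCommGroup (G : Type*) [AddCommGroup G] :
    LAb.Structure G where
  funMap f x :=
    match f with
    | AbGroupFunc.add => x 0 + x 1
    | AbGroupFunc.neg => -x 0
    | AbGroupFunc.zero => 0
  RelMap r _ := r.elim

/-- Two `LAb`-structures are isotyped if every type of a tuple realized in one of them
is also realized in the other. -/
def Isotyped (L : FirstOrder.Language) (M N : Type*) [L.Structure M] [L.Structure N] :
    Prop :=
  (∀ (n : ℕ) (a : Fin n → M), ∃ b : Fin n → N,
      ∀ φ : L.Formula (Fin n), φ.Realize a ↔ φ.Realize b) ∧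
  (∀ (n : ℕ) (b : Fin n → N), ∃ a : Fin n → M,
      ∀ φ : L.Formula (Fin n), φ.Realize a ↔ φ.Realize b)

namespace LAbAux

open FirstOrder FirstOrder.Language

variable {α : Type*}

def zeroT : LAb.Term α := Term.func AbGroupFunc.zero finZeroElim
def addT (t s : LAb.Term α) : LAb.Term α := Term.func AbGroupFunc.add ![t, s]
def negT (t : LAb.Term α) : LAb.Term α := Term.func AbGroupFunc.neg ![t]

def nsmulT : ℕ → LAb.Term α → LAb.Term α
  | 0, _ => zeroT
  | m + 1, t => addT (nsmulT m t) t

def zsmulT (c : ℤ) (t : LAb.Term α) : LAb.Term α :=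
  if 0 ≤ c then nsmulT c.toNat t else negT (nsmulT (-c).toNat t)

def sumT (l : List (LAb.Term α)) : LAb.Term α := l.foldr addT zeroT

variable {M : Type*} [AddCommGroup M] {v : α → M}

@[simp] lemma realize_zeroT : (zeroT : LAb.Term α).realize v = 0 := rfl

@[simp] lemma realize_addT {t s : LAb.Term α} :
    (addT t s).realize v = t.realize v + s.realize v := rfl

@[simp] lemma realize_negT {t : LAb.Term α} : (negT t).realize v = -t.realize v := rfl

@[simp] lemma realize_nsmulT {m : ℕ} {t : LAb.Term α} :
    (nsmulT m t).realize v = m • t.realize v := by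
  induction m with
  | zero => simp [nsmulT]
  | succ m ih => simp [nsmulT, ih, succ_nsmul]

@[simp] lemma realize_zsmulT {c : ℤ} {t : LAb.Term α} :
    (zsmulT c t).realize v = c • t.realize v := by
  by_cases hc : 0 ≤ c
  · simp only [zsmulT, if_pos hc, realize_nsmulT]
    rw [← Int.toNat_of_nonneg hc, natCast_zsmul, Int.toNat_of_nonneg hc]
  · simp only [zsmulT, if_neg hc, realize_negT, realize_nsmulT]
    rw [← natCast_zsmul, Int.toNat_of_nonneg (by omega), neg_zsmul, neg_neg]

lemma realize_sumT {l : List (LAb.Term α)} :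
    (sumT l).realize v = (l.map fun t => t.realize v).sum := by
  induction l with
  | nil => simp [sumT]
  | cons t l ih => simp [sumT, List.foldr] at ih ⊢; simp [ih]

def combT {N : ℕ} (c : Fin N → ℤ) : LAb.Term (Fin N) :=
  sumT ((List.finRange N).map fun i => zsmulT (c i) (Term.var i))

lemma realize_combT {N : ℕ} {c : Fin N → ℤ} {v : Fin N → M} :
    (combT c).realize v = ∑ i, c i • v i := by
  simp only [combT, realize_sumT, List.map_map]
  rw [Fin.sum_univ_def]
  congr 1
  ext i
  simp [Function.comp]

def relF {N : ℕ} (c : Fin N → ℤ) : LAb.Formula (Fin N) := Term.equal (combT c) zeroT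

lemma realize_relF {N : ℕ} {c : Fin N → ℤ} {v : Fin N → M} :
    (relF c).Realize v ↔ ∑ i, c i • v i = 0 := by
  rw [relF, Formula.realize_equal, realize_combT, realize_zeroT]

def divF {N : ℕ} (p : ℕ) (c : Fin N → ℤ) : LAb.Formula (Fin N) :=
  BoundedFormula.ex (Term.bdEqual (nsmulT p (Term.var (Sum.inr 0)))
    (Term.relabel Sum.inl (combT c)))

lemma realize_divF {N : ℕ} {p : ℕ} {c : Fin N → ℤ} {v : Fin N → M} :
    (divF p c).Realize v ↔ ∃ z : M, p • z = ∑ i, c i • v i := by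
  rw [divF]
  show BoundedFormula.Realize _ v (default : Fin 0 → M) ↔ _
  rw [BoundedFormula.realize_ex]
  refine exists_congr fun z => ?_
  rw [BoundedFormula.realize_bdEqual, Term.realize_relabel, realize_nsmulT]
  have h0 : (Sum.elim v (Fin.snoc (default : Fin 0 → M) z) : _ → M) (Sum.inr 0) = z := by
    simp [Fin.snoc]
  have h1 : (Sum.elim v (Fin.snoc (default : Fin 0 → M) z) : Fin N ⊕ Fin 1 → M) ∘ Sum.inl = v := rfl
  rw [Term.realize_var, h0, h1, realize_combT]

end LAbAux

open FirstOrder FirstOrder.Language LAbAux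

/-- If an abelian group `G` is isotyped with the free abelian group `Fin n → ℤ`
of finite rank `n`, then `G` is isomorphic to it. -/
theorem isotyped_with_free_abelian_is_isomorphic {n : ℕ} {G : Type*} [AddCommGroup G]
    (h : Isotyped LAb G (Fin n → ℤ)) :
    Nonempty (G ≃+ (Fin n → ℤ)) := by
  classical
  set e : Fin n → (Fin n → ℤ) := fun i => Pi.single i 1 with he
  have keyE : ∀ c : Fin n → ℤ, ∑ i, c i • e i = c := by
    intro c; funext j
    rw [Finset.sum_apply]
    simp [he, Pi.single_apply]
  obtain ⟨a, ha⟩ := h.2 n e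
  -- independence of a
  have hind : ∀ c : Fin n → ℤ, ∑ i, c i • a i = 0 → c = 0 := by
    intro c hc
    have h1 := (ha (relF c)).mp (realize_relF.mpr hc)
    rw [realize_relF, keyE] at h1
    exact h1
  -- surjectivity
  have hsurj : ∀ g : G, ∃ k : Fin n → ℤ, ∑ i, k i • a i = g := by
    intro g
    obtain ⟨b', hb'⟩ := h.1 (n + 1) (Fin.snoc a g)
    set b : Fin n → (Fin n → ℤ) := b' ∘ Fin.castSucc with hbdef
    have hb : ∀ φ : LAb.Formula (Fin n), φ.Realize b ↔ φ.Realize e := by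
      intro φ
      have h1 := hb' (φ.relabel Fin.castSucc)
      rw [Formula.realize_relabel, Formula.realize_relabel] at h1
      have h2 : (Fin.snoc a g : Fin (n + 1) → G) ∘ Fin.castSucc = a :=
        funext fun i => by simp
      rw [h2] at h1
      exact h1.symm.trans (ha φ)
    set B : Matrix (Fin n) (Fin n) ℤ := Matrix.of fun i j => b i j with hB
    have hdet : IsUnit B.det := by
      rw [Int.isUnit_iff_natAbs_eq, Nat.eq_one_iff_not_exists_prime_dvd]
      intro p hp hpd
      haveI : Fact p.Prime := ⟨hp⟩
      have hpdvd : (p : ℤ) ∣ B.det := Int.natAbs_dvd.mp (Int.natCast_dvd_natCast.mpr hpd |>.trans (Int.natAbs_dvd.mpr dvd_rfl))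
      have hdm : (B.map (Int.cast : ℤ → ZMod p)).det = 0 := by
        rw [show B.map (Int.cast : ℤ → ZMod p) = (Int.castRingHom (ZMod p)).mapMatrix B from rfl,
          ← RingHom.map_det]
        exact (ZMod.intCast_zmod_eq_zero_iff_dvd _ _).mpr hpdvd
      obtain ⟨c', hc0, hcA⟩ := Matrix.exists_vecMul_eq_zero_iff.mpr hdm
      set c : Fin n → ℤ := fun i => ((c' i).val : ℤ) with hc
      have hdvd : ∀ j, (p : ℤ) ∣ ∑ i, c i * B i j := by
        intro j
        rw [← ZMod.intCast_zmod_eq_zero_iff_dvd]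
        push_cast
        have h3 := congrFun hcA j
        simp only [Matrix.vecMul, dotProduct, Matrix.map_apply, Pi.zero_apply] at h3
        rw [← h3]
        refine Finset.sum_congr rfl fun i _ => ?_
        simp [hc, ZMod.natCast_val, ZMod.cast_id]
      have hdivb : (divF p c).Realize b := by
        rw [realize_divF]
        refine ⟨fun j => (∑ i, c i * B i j) / p, ?_⟩
        funext j
        rw [Finset.sum_apply, Pi.smul_apply]
        have h4 : ∀ i, (c i • b i) j = c i * B i j := fun i => rfl
        simp only [h4]
        rw [nsmul_eq_mul]
        exact Int.mul_ediv_cancel' (hdvd j)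
      have hdive := (hb (divF p c)).mp hdivb
      rw [realize_divF, keyE] at hdive
      obtain ⟨w, hw⟩ := hdive
      apply hc0
      funext i
      have h5 : (p : ℤ) ∣ c i := ⟨w i, by
        have := congrFun hw i
        simpa [mul_comm] using this.symm⟩
      have h6 : ((c i : ℤ) : ZMod p) = 0 := (ZMod.intCast_zmod_eq_zero_iff_dvd _ _).mpr h5
      have h7 : ((c i : ℤ) : ZMod p) = c' i := by
        simp [hc, ZMod.natCast_val, ZMod.cast_id]
      rw [h7] at h6
      simpa using h6
    haveI := B.invertibleOfIsUnitDet hdet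
    set k : Fin n → ℤ := Matrix.vecMul (b' (Fin.last n)) (⅟B) with hk
    have hkB : Matrix.vecMul k B = b' (Fin.last n) := by
      rw [hk, Matrix.vecMul_vecMul, invOf_mul_self, Matrix.vecMul_one]
    have hkb : ∑ i, k i • b i = b' (Fin.last n) := by
      funext j
      have := congrFun hkB j
      simp only [Matrix.vecMul, dotProduct] at this
      rw [Finset.sum_apply]
      exact this
    set d : Fin (n + 1) → ℤ := Fin.snoc k (-1) with hd
    have hθb : (relF d).Realize b' := by
      rw [realize_relF, Fin.sum_univ_castSucc]
      simp only [hd, Fin.snoc_castSucc, Fin.snoc_last]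
      simp only [hbdef, Function.comp_apply] at hkb
      rw [neg_one_zsmul, hkb, add_neg_cancel]
    have hθa := (hb' (relF d)).mpr hθb
    rw [realize_relF, Fin.sum_univ_castSucc] at hθa
    simp only [hd, Fin.snoc_castSucc, Fin.snoc_last] at hθa
    refine ⟨k, ?_⟩
    have h8 : ∑ i, k i • a i + (-1 : ℤ) • g = 0 := hθa
    rw [neg_one_zsmul, ← sub_eq_add_neg] at h8
    exact sub_eq_zero.mp h8
  -- build the isomorphism
  let f : (Fin n → ℤ) →+ G :=
    { toFun := fun v => ∑ i, v i • a i
      map_zero' := by simp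
      map_add' := by
        intro v w
        simp only [Pi.add_apply, add_smul, Finset.sum_add_distrib] }
  have hinj : Function.Injective f := by
    rw [injective_iff_map_eq_zero]
    intro v hv
    exact hind v hv
  have hsur : Function.Surjective f := fun g => (hsurj g).imp fun k hk => hk
  exact ⟨(AddEquiv.ofBijective f ⟨hinj, hsur⟩).symm⟩
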